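/- Let ℓ∞ denote the real Banach space of bounded real sequences with the supremum norm, regarded as the dual of ℓ₁. For every x = (x_n) ∈ B_{ℓ∞}, the weak* Daugavet constant of x satisfies wDc(x) = 1 + limsup_n |x_n|. -/

import Mathlib

open Set Metric Filter ENNReal

variable {X : Type*} [NormedAddCommGroup X] [NormedSpace ℝ X]

/-- The slice `S(f, δ)` of the closed unit ball of `X`, determined by a norm-one functional
`f` and `δ > 0` (the norm and positivity conditions are imposed at use sites). -/
def unitBallSlice (f : X →L[ℝ] ℝ) (δ : ℝ) : Set X :=
  {y | ‖y‖ ≤ 1 ∧ 1 - δ < f y}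

/-- The Daugavet constant of a point: the infimum over all slices of the unit ball of the
supremum of distances from `x` to points of the slice. -/
noncomputable def Dc (x : X) : ℝ :=
  sInf {r | ∃ (f : X →L[ℝ] ℝ) (δ : ℝ), ‖f‖ = 1 ∧ 0 < δ ∧
    r = sSup ((fun y => ‖x - y‖) '' unitBallSlice f δ)}

/-- The Δ-constant of a point: the infimum over all slices of the unit ball containing `x`
of the supremum of distances from `x` to points of the slice. -/
noncomputable def DeltaC (x : X) : ℝ :=
  sInf {r | ∃ (f : X →L[ℝ] ℝ) (δ : ℝ), ‖f‖ = 1 ∧ 0 < δ ∧ x ∈ unitBallSlice f δ ∧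
    r = sSup ((fun y => ‖x - y‖) '' unitBallSlice f δ)}

/-- The weak* Daugavet constant of a point of `B_{ℓ∞}`, where `ℓ∞ = ℓ₁*`: the infimum over
all weak* slices (slices of `B_{ℓ∞}` given by norm-one elements of `ℓ₁`) of the supremum of
distances from `x` to points of the slice. -/
noncomputable def wDc (x : lp (fun _ : ℕ => ℝ) ∞) : ℝ :=
  sInf {r | ∃ (y : lp (fun _ : ℕ => ℝ) 1) (δ : ℝ), ‖y‖ = 1 ∧ 0 < δ ∧
    r = sSup ((fun z => ‖x - z‖) ''
      {z : lp (fun _ : ℕ => ℝ) ∞ | ‖z‖ ≤ 1 ∧ 1 - δ < ∑' j, y j * z j})}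


noncomputable def sg (t : ℝ) : ℝ := if 0 ≤ t then 1 else -1

lemma sg_abs (t : ℝ) : |sg t| = 1 := by unfold sg; split <;> simp
lemma sg_mul (t : ℝ) : t * sg t = |t| := by
  unfold sg; split <;> rename_i h
  · simp [abs_of_nonneg h]
  · rw [abs_of_neg (lt_of_not_ge h)]; ring
lemma sg_sq (t : ℝ) : sg t * sg t = 1 := by unfold sg; split <;> norm_num
lemma abs_sub_sg_le {t : ℝ} (ht : |t| ≤ 1) : |t - sg t| ≤ 1 := by
  rw [abs_le] at ht; unfold sg; split <;> rename_i h <;> rw [abs_le] <;> constructor <;> linarith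
lemma abs_add_sg (t : ℝ) : |t + sg t| = 1 + |t| := by
  unfold sg; split <;> rename_i h
  · rw [abs_of_nonneg (by linarith), abs_of_nonneg h]; ring
  · rw [abs_of_neg (lt_of_not_ge h), abs_of_neg (by linarith)]; ring

noncomputable def mkInf (f : ℕ → ℝ) (h : ∀ j, |f j| ≤ 1) : lp (fun _ : ℕ => ℝ) ∞ :=
  ⟨f, memℓp_infty ⟨1, by rintro r ⟨j, rfl⟩; simpa using h j⟩⟩
@[simp] lemma mkInf_apply (f : ℕ → ℝ) (h : ∀ j, |f j| ≤ 1) (j : ℕ) : (mkInf f h) j = f j := rfl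
lemma mkInf_norm_le (f : ℕ → ℝ) (h : ∀ j, |f j| ≤ 1) : ‖mkInf f h‖ ≤ 1 :=
  lp.norm_le_of_forall_le zero_le_one fun j => by simpa using h j

noncomputable def mkOne (f : ℕ → ℝ) (N : ℕ) (h : ∀ j, N ≤ j → f j = 0) : lp (fun _ : ℕ => ℝ) 1 :=
  ⟨f, memℓp_gen (by
    apply summable_of_ne_finset_zero (s := Finset.range N)
    intro j hj
    simp [h j (by simpa using hj)])⟩
@[simp] lemma mkOne_apply (f : ℕ → ℝ) (N : ℕ) (h : ∀ j, N ≤ j → f j = 0) (j : ℕ) :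
    (mkOne f N h) j = f j := rfl

lemma norm_lp_one (y : lp (fun _ : ℕ => ℝ) 1) : ‖y‖ = ∑' j, |y j| := by
  have := lp.norm_eq_tsum_rpow (p := 1) (by norm_num) y
  simpa using this

lemma abs_apply_le_norm_inf (z : lp (fun _ : ℕ => ℝ) ∞) (j : ℕ) : |z j| ≤ ‖z‖ := by
  rw [← Real.norm_eq_abs]
  exact lp.norm_apply_le_norm (p := ∞) (by norm_num) z j

lemma hasSum_abs_lp_one (y : lp (fun _ : ℕ => ℝ) 1) : HasSum (fun j => |y j|) ‖y‖ := by
  have := lp.hasSum_norm (p := 1) (by norm_num) y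
  simpa using this

/-- Upper bound: a slice witnessing `wDc x ≤ 1 + L + ε`. -/
lemma upper_slice (x : lp (fun _ : ℕ => ℝ) ∞) (hx : ‖x‖ ≤ 1) {ε : ℝ} (hε : 0 < ε) :
    ∃ (y : lp (fun _ : ℕ => ℝ) 1) (δ : ℝ), ‖y‖ = 1 ∧ 0 < δ ∧
      sSup ((fun z => ‖x - z‖) ''
        {z : lp (fun _ : ℕ => ℝ) ∞ | ‖z‖ ≤ 1 ∧ 1 - δ < ∑' j, y j * z j})
      ≤ 1 + Filter.limsup (fun j => |x j|) Filter.atTop + ε := by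
  set L := Filter.limsup (fun j => |x j|) Filter.atTop with hL
  have hxj : ∀ j, |x j| ≤ 1 := fun j => (abs_apply_le_norm_inf x j).trans hx
  have hbdd : Filter.IsBoundedUnder (· ≤ ·) Filter.atTop (fun j => |x j|) :=
    Filter.isBoundedUnder_of ⟨1, hxj⟩
  have hLnn : 0 ≤ L :=
    le_limsup_of_frequently_le (Filter.Frequently.of_forall fun j => abs_nonneg _) hbdd
  have hev : ∀ᶠ j in Filter.atTop, |x j| < L + ε :=
    eventually_lt_of_limsup_lt (by linarith) hbdd
  obtain ⟨N₀, hN₀⟩ := Filter.eventually_atTop.1 hev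
  set N := max N₀ 1 with hN
  have hN1 : 1 ≤ N := le_max_right _ _
  have hNpos : (0:ℝ) < N := by positivity
  have htail : ∀ j, N ≤ j → |x j| < L + ε := fun j hj => hN₀ j (le_trans (le_max_left _ _) hj)
  refine ⟨mkOne (fun j => if j < N then sg (x j) / N else 0) N
      (fun j hj => by simp [Nat.not_lt.2 hj]), ε / N, ?_, by positivity, ?_⟩
  · rw [norm_lp_one]
    have h0 : ∀ j ∉ Finset.range N,
        |(mkOne (fun j => if j < N then sg (x j) / N else 0) N
          (fun j hj => by simp [Nat.not_lt.2 hj])) j| = 0 := by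
      intro j hj
      simp [Finset.mem_range.not.1 hj, Nat.not_lt.1 (Finset.mem_range.not.1 hj)]
    rw [tsum_eq_sum h0]
    have : ∀ j ∈ Finset.range N,
        |(mkOne (fun j => if j < N then sg (x j) / N else 0) N
          (fun j hj => by simp [Nat.not_lt.2 hj])) j| = 1 / N := by
      intro j hj
      simp only [mkOne_apply, Finset.mem_range.1 hj, if_pos, abs_div]
      rw [sg_abs]
      simp [abs_of_pos hNpos]
    rw [Finset.sum_congr rfl this]
    simp
    field_simp
  · apply Real.sSup_le
    · rintro r ⟨z, ⟨hz1, hz2⟩, rfl⟩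
      set y := mkOne (fun j => if j < N then sg (x j) / N else 0) N
          (fun j hj => by simp [Nat.not_lt.2 hj]) with hy
      have hzj : ∀ j, |z j| ≤ 1 := fun j => (abs_apply_le_norm_inf z j).trans hz1
      have hsum : ∑' j, y j * z j = ∑ j ∈ Finset.range N, sg (x j) / N * z j := by
        rw [tsum_eq_sum (s := Finset.range N)]
        · refine Finset.sum_congr rfl fun j hj => ?_
          simp [hy, Finset.mem_range.1 hj]
        · intro j hj
          simp [hy, Nat.not_lt.1 (Finset.mem_range.not.1 hj)]
      rw [hsum] at hz2
      -- each head coordinate is close to the sign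
      have hhead : ∀ j < N, 1 - ε < sg (x j) * z j := by
        intro j hjN
        have hterm : ∀ i ∈ Finset.range N, sg (x i) / N * z i ≤ 1 / N := by
          intro i _
          have h1 : sg (x i) * z i ≤ 1 := by
            calc sg (x i) * z i ≤ |sg (x i) * z i| := le_abs_self _
              _ = |sg (x i)| * |z i| := abs_mul _ _
              _ ≤ 1 := by rw [sg_abs]; simpa using hzj i
          have : sg (x i) / N * z i = (sg (x i) * z i) / N := by ring
          rw [this]
          gcongr
        have hmem : j ∈ Finset.range N := Finset.mem_range.2 hjN
        have hsplit : ∑ i ∈ Finset.range N, sg (x i) / N * z i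
            = sg (x j) / N * z j + ∑ i ∈ (Finset.range N).erase j, sg (x i) / N * z i :=
          (Finset.add_sum_erase _ _ hmem).symm
        have herase : ∑ i ∈ (Finset.range N).erase j, sg (x i) / N * z i
            ≤ ((N : ℝ) - 1) * (1 / N) := by
          have hcard : ((Finset.range N).erase j).card = N - 1 := by
            rw [Finset.card_erase_of_mem hmem, Finset.card_range]
          calc ∑ i ∈ (Finset.range N).erase j, sg (x i) / N * z i
              ≤ ∑ i ∈ (Finset.range N).erase j, 1 / (N:ℝ) :=
                Finset.sum_le_sum fun i hi => hterm i (Finset.mem_of_mem_erase hi)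
            _ = (((Finset.range N).erase j).card : ℝ) * (1 / N) := by
                rw [Finset.sum_const, nsmul_eq_mul]
            _ = ((N : ℝ) - 1) * (1 / N) := by
                rw [hcard]
                have : ((N - 1 : ℕ) : ℝ) = (N : ℝ) - 1 := by
                  rw [Nat.cast_sub hN1]; norm_num
                rw [this]
          
        have h1 : sg (x j) / N * z j > 1 - ε / N - ((N:ℝ) - 1) * (1 / N) := by linarith
        have hNne : (N:ℝ) ≠ 0 := ne_of_gt hNpos
        have h2 : (1 - ε) / N < sg (x j) * z j / N := by
          have heq : 1 - ε / N - ((N:ℝ) - 1) * (1 / N) = (1 - ε) / N := by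
            field_simp
            ring
          have h3 : sg (x j) / N * z j = sg (x j) * z j / N := by ring
          rw [heq, h3] at h1
          exact h1
        exact (div_lt_div_iff_of_pos_right hNpos).1 h2
      have hcoord : ∀ j, |x j - z j| ≤ 1 + L + ε := by
        intro j
        by_cases hjN : j < N
        · have h1 := hhead j hjN
          have hsz : sg (x j) * z j ≤ 1 := by
            calc sg (x j) * z j ≤ |sg (x j) * z j| := le_abs_self _
              _ = |sg (x j)| * |z j| := abs_mul _ _
              _ ≤ 1 := by rw [sg_abs]; simpa using hzj j
          have habs : |sg (x j) - z j| = 1 - sg (x j) * z j := by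
            have : |sg (x j) - z j| = |sg (x j)| * |sg (x j) - z j| := by rw [sg_abs, one_mul]
            rw [this, ← abs_mul]
            have : sg (x j) * (sg (x j) - z j) = 1 - sg (x j) * z j := by
              have := sg_sq (x j); nlinarith [sg_sq (x j)]
            rw [this, abs_of_nonneg (by linarith)]
          calc |x j - z j| ≤ |x j - sg (x j)| + |sg (x j) - z j| := by
                have : x j - z j = (x j - sg (x j)) + (sg (x j) - z j) := by ring
                rw [this]; exact abs_add_le _ _
            _ ≤ 1 + (1 - sg (x j) * z j) := by
                have := abs_sub_sg_le (hxj j); rw [habs]; linarith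
            _ ≤ 1 + L + ε := by linarith
        · have := htail j (Nat.not_lt.1 hjN)
          calc |x j - z j| ≤ |x j| + |z j| := abs_sub _ _
            _ ≤ (L + ε) + 1 := add_le_add this.le (hzj j)
            _ = 1 + L + ε := by ring
      have : ‖x - z‖ ≤ 1 + L + ε := by
        apply lp.norm_le_of_forall_le (by linarith)
        intro j
        have : (x - z) j = x j - z j := by
          rw [lp.coeFn_sub]; rfl
        rw [Real.norm_eq_abs, this]
        exact hcoord j
      exact this
    · linarith

lemma lower_bound (x : lp (fun _ : ℕ => ℝ) ∞) (hx : ‖x‖ ≤ 1)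
    (y : lp (fun _ : ℕ => ℝ) 1) (δ : ℝ) (hy : ‖y‖ = 1) (hδ : 0 < δ) :
    1 + Filter.limsup (fun j => |x j|) Filter.atTop ≤
      sSup ((fun z => ‖x - z‖) ''
        {z : lp (fun _ : ℕ => ℝ) ∞ | ‖z‖ ≤ 1 ∧ 1 - δ < ∑' j, y j * z j}) := by
  set L := Filter.limsup (fun j => |x j|) Filter.atTop with hL
  have hsumy : HasSum (fun j => |y j|) 1 := hy ▸ hasSum_abs_lp_one y
  -- find N with large partial sum
  have htend : Filter.Tendsto (fun n => ∑ j ∈ Finset.range n, |y j|) Filter.atTop (nhds 1) :=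
    hsumy.tendsto_sum_nat
  have hev : ∀ᶠ n in Filter.atTop, 1 - δ / 2 < ∑ j ∈ Finset.range n, |y j| :=
    htend.eventually (eventually_gt_nhds (by linarith))
  obtain ⟨N, hN⟩ := Filter.eventually_atTop.1 hev
  have hNsum : 1 - δ / 2 < ∑ j ∈ Finset.range N, |y j| := hN N le_rfl
  -- the witness z
  set zf : ℕ → ℝ := fun j => if j < N then sg (y j) else -(sg (x j)) with hzf
  have hzb : ∀ j, |zf j| ≤ 1 := by
    intro j
    simp only [hzf]
    split
    · exact (sg_abs _).le
    · rw [abs_neg]; exact (sg_abs _).le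
  set z := mkInf zf hzb with hz
  -- pairing estimate
  have hsy : Summable (fun j => |y j|) := hsumy.summable
  set s : ℕ → ℝ := fun j => if j < N then |y j| else 0 with hs
  have hss : Summable s := by
    apply summable_of_ne_finset_zero (s := Finset.range N)
    intro j hj
    simp [hs, Nat.not_lt.1 (Finset.mem_range.not.1 hj)]
  have hsg : Summable (fun j => 2 * s j - |y j|) := ((hss.mul_left 2).sub hsy)
  have hyz : Summable (fun j => y j * z j) := by
    apply Summable.of_norm_bounded hsy
    intro j
    rw [Real.norm_eq_abs, abs_mul]
    calc |y j| * |z j| ≤ |y j| * 1 := by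
          apply mul_le_mul_of_nonneg_left (hzb j) (abs_nonneg _)
      _ = |y j| := mul_one _
  have hpt : ∀ j, 2 * s j - |y j| ≤ y j * z j := by
    intro j
    by_cases hj : j < N
    · have : z j = sg (y j) := by simp [hz, hzf, hj]
      rw [this, sg_mul]
      simp only [hs, if_pos hj]
      linarith
    · have : z j = -(sg (x j)) := by simp [hz, hzf, hj]
      rw [this]
      have h1 : y j * sg (x j) ≤ |y j| := by
        calc y j * sg (x j) ≤ |y j * sg (x j)| := le_abs_self _
          _ = |y j| * |sg (x j)| := abs_mul _ _
          _ = |y j| := by rw [sg_abs, mul_one]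
      simp only [hs, if_neg hj]
      linarith
  have htsum_s : ∑' j, s j = ∑ j ∈ Finset.range N, |y j| := by
    rw [tsum_eq_sum (s := Finset.range N)]
    · exact Finset.sum_congr rfl fun j hj => by simp [hs, Finset.mem_range.1 hj]
    · intro j hj
      simp [hs, Nat.not_lt.1 (Finset.mem_range.not.1 hj)]
  have hgsum : ∑' j, (2 * s j - |y j|) = 2 * (∑ j ∈ Finset.range N, |y j|) - 1 := by
    rw [Summable.tsum_sub (hss.mul_left 2) hsy, tsum_mul_left, htsum_s, hsumy.tsum_eq]
  have hpair : 1 - δ < ∑' j, y j * z j := by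
    have h1 : ∑' j, (2 * s j - |y j|) ≤ ∑' j, y j * z j := Summable.tsum_le_tsum hpt hsg hyz
    rw [hgsum] at h1
    linarith
  -- z is in the slice
  have hmem : z ∈ {z : lp (fun _ : ℕ => ℝ) ∞ | ‖z‖ ≤ 1 ∧ 1 - δ < ∑' j, y j * z j} :=
    ⟨mkInf_norm_le _ _, hpair⟩
  -- the image is bounded above by 2
  have hbdd : BddAbove ((fun z => ‖x - z‖) ''
      {z : lp (fun _ : ℕ => ℝ) ∞ | ‖z‖ ≤ 1 ∧ 1 - δ < ∑' j, y j * z j}) := by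
    refine ⟨2, ?_⟩
    rintro r ⟨w, ⟨hw, _⟩, rfl⟩
    calc ‖x - w‖ ≤ ‖x‖ + ‖w‖ := norm_sub_le _ _
      _ ≤ 1 + 1 := add_le_add hx hw
      _ = 2 := by norm_num
  have hle : ‖x - z‖ ≤ sSup _ := le_csSup hbdd ⟨z, hmem, rfl⟩
  refine le_trans ?_ hle
  -- 1 + L ≤ ‖x - z‖
  have hcob : Filter.IsCoboundedUnder (· ≤ ·) Filter.atTop (fun j => |x j|) :=
    (Filter.isBoundedUnder_of ⟨0, fun j => abs_nonneg _⟩ :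
      Filter.IsBoundedUnder (· ≥ ·) Filter.atTop (fun j => |x j|)).isCoboundedUnder_le
  have hLle : L ≤ ‖x - z‖ - 1 := by
    apply Filter.limsup_le_of_le hcob
    rw [Filter.eventually_atTop]
    refine ⟨N, fun j hj => ?_⟩
    have hzj : z j = -(sg (x j)) := by simp [hz, hzf, Nat.not_lt.2 hj]
    have h1 : (x - z) j = x j + sg (x j) := by
      have : (x - z) j = x j - z j := by rw [lp.coeFn_sub]; rfl
      rw [this, hzj]; ring
    have h2 : |(x - z) j| ≤ ‖x - z‖ := abs_apply_le_norm_inf _ _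
    rw [h1, abs_add_sg] at h2
    linarith
  linarith

/-- For every `x ∈ B_{ℓ∞}`, the weak* Daugavet constant equals `1 + limsup_n |x_n|`. -/
theorem weakStarDaugavetConstant_linfty (x : lp (fun _ : ℕ => ℝ) ∞) (hx : ‖x‖ ≤ 1) :
    wDc x = 1 + Filter.limsup (fun j => |x j|) Filter.atTop := by
  have hA : {r | ∃ (y : lp (fun _ : ℕ => ℝ) 1) (δ : ℝ), ‖y‖ = 1 ∧ 0 < δ ∧
      r = sSup ((fun z => ‖x - z‖) ''
        {z : lp (fun _ : ℕ => ℝ) ∞ | ‖z‖ ≤ 1 ∧ 1 - δ < ∑' j, y j * z j})}.Nonempty := by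
    obtain ⟨y, δ, h1, h2, _⟩ := upper_slice x hx one_pos
    exact ⟨_, y, δ, h1, h2, rfl⟩
  have hbelow : BddBelow {r | ∃ (y : lp (fun _ : ℕ => ℝ) 1) (δ : ℝ), ‖y‖ = 1 ∧ 0 < δ ∧
      r = sSup ((fun z => ‖x - z‖) ''
        {z : lp (fun _ : ℕ => ℝ) ∞ | ‖z‖ ≤ 1 ∧ 1 - δ < ∑' j, y j * z j})} := by
    refine ⟨0, ?_⟩
    rintro r ⟨y, δ, hy, hδ, rfl⟩
    exact Real.sSup_nonneg (by rintro t ⟨w, _, rfl⟩; exact norm_nonneg _)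
  rw [wDc]
  apply le_antisymm
  · apply _root_.le_of_forall_pos_le_add
    intro ε hε
    obtain ⟨y, δ, h1, h2, h3⟩ := upper_slice x hx hε
    exact (csInf_le hbelow ⟨y, δ, h1, h2, rfl⟩).trans h3
  · refine le_csInf hA ?_
    rintro r ⟨y, δ, hy, hδ, rfl⟩
    exact lower_bound x hx y δ hy hδ
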